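/- Let D and L be the operators on ℂ[z] with D(z^m) = m z^{m−1} and L(Σ c_k z^k) = Σ c_{k+1} z^k. Then for every i ≥ 1 and every x ∈ ℂ, the operator identity Σ_{i_1+⋯+i_k=i} x^k · D L^{i_1−1} ⋯ D L^{i_k−1} = x D (L + xD)^{i−1} holds, where the sum runs over compositions of i. -/

import Mathlib

open Polynomial Finset

/-- Differentiation `D` as a linear operator on `ℂ[z]`. -/
noncomputable def Dop : Module.End ℂ (Polynomial ℂ) := Polynomial.derivative

/-- The left translation operator `L`, sending `Σ c_k z^k` to `Σ c_{k+1} z^k`. -/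
noncomputable def Lop : Module.End ℂ (Polynomial ℂ) where
  toFun := Polynomial.divX
  map_add' p q := Polynomial.divX_add
  map_smul' c p := by
    ext n
    simp [Polynomial.coeff_divX]

lemma ring_key {M : Type*} [Ring M] (A B : M) (n : ℕ) :
    (A + B) ^ n = A ^ n + ∑ j ∈ Finset.range n, A ^ j * B * (A + B) ^ (n - 1 - j) := by
  induction n with
  | zero => simp
  | succ n ih =>
    have h : (A + B) ^ (n + 1) = A * (A + B) ^ n + B * (A + B) ^ n := by
      rw [pow_succ', add_mul]
    rw [h]
    nth_rewrite 1 [ih]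
    rw [mul_add, Finset.mul_sum, Finset.sum_range_succ']
    simp only [Nat.add_sub_cancel, pow_zero, one_mul, Nat.sub_zero, ← mul_assoc, ← pow_succ']
    have : ∀ j ∈ Finset.range n, A ^ (j+1) * B * (A+B) ^ (n - 1 - j)
        = A ^ (j+1) * B * (A+B) ^ (n - (j+1)) := by
      intro j hj
      have e : n - 1 - j = n - (j+1) := by omega
      rw [e]
    rw [Finset.sum_congr rfl this]
    ring_nf
    abel

/-- Auxiliary RHS operator family. -/
noncomputable def Rop (x : ℂ) : ℕ → Module.End ℂ (Polynomial ℂ)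
  | 0 => 1
  | n + 1 => (x • Dop) * (Lop + x • Dop) ^ n

lemma Rop_succ (x : ℂ) (n : ℕ) :
    Rop x (n + 1) = ∑ j ∈ Finset.range (n + 1),
      (x • (Dop * Lop ^ j)) * Rop x (n - j) := by
  have hBA : ∀ j : ℕ, (x • (Dop * Lop ^ j)) = (x • Dop) * Lop ^ j := fun j => by
    rw [smul_mul_assoc]
  rw [show Rop x (n+1) = (x • Dop) * (Lop + x • Dop) ^ n from rfl,
    ring_key Lop (x • Dop) n, mul_add, Finset.mul_sum, Finset.sum_range_succ, add_comm]
  refine congrArg₂ (· + ·) ?_ ?_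
  · refine Finset.sum_congr rfl fun j hj => ?_
    simp only [Finset.mem_range] at hj
    have h1 : n - j = (n - 1 - j) + 1 := by omega
    rw [hBA, h1, show Rop x ((n-1-j)+1) = (x • Dop) * (Lop + x • Dop) ^ (n-1-j) from rfl]
    rw [mul_assoc, mul_assoc]
  · rw [hBA, show Rop x (n - n) = 1 by simp [Rop], mul_one]

/-- Prepending a first block to a composition. -/
def consC (n : ℕ) (p : Σ j : Fin (n + 1), Composition (n - j)) : Composition (n + 1) :=
  ⟨(p.1 + 1) :: p.2.blocks, by
    rintro k hk
    rcases List.mem_cons.1 hk with rfl | hk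
    · omega
    · exact p.2.blocks_pos hk, by
    have := p.2.blocks_sum
    have hj := p.1.isLt
    simp only [List.sum_cons, this]
    omega⟩

lemma consC_bij (n : ℕ) : Function.Bijective (consC n) := by
  constructor
  · rintro ⟨j, c⟩ ⟨j', c'⟩ h
    have hb : ((j : ℕ) + 1) :: c.blocks = ((j' : ℕ) + 1) :: c'.blocks :=
      congrArg Composition.blocks h
    have hj : (j : ℕ) = (j' : ℕ) := by
      have := List.head_eq_of_cons_eq hb; omega
    have hjj : j = j' := Fin.ext hj
    subst hjj
    have hc : c.blocks = c'.blocks := List.tail_eq_of_cons_eq hb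
    have : c = c' := Composition.ext hc
    subst this
    rfl
  · intro c
    have hne : c.blocks ≠ [] := by
      intro h
      have := c.blocks_sum
      rw [h] at this
      simp at this
    obtain ⟨b, t, hbt⟩ := List.exists_cons_of_ne_nil hne
    have hb1 : 1 ≤ b := c.blocks_pos (by rw [hbt]; exact List.mem_cons_self)
    have hsum : b + t.sum = n + 1 := by
      have := c.blocks_sum; rw [hbt] at this; simpa using this
    refine ⟨⟨⟨b - 1, by omega⟩, ⟨t, ?_, ?_⟩⟩, ?_⟩
    · intro k hk
      exact c.blocks_pos (by rw [hbt]; exact List.mem_cons_of_mem _ hk)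
    · simp only [Fin.val_mk]
      omega
    · apply Composition.ext
      show (b - 1 + 1) :: t = c.blocks
      rw [hbt]
      congr 1
      omega

lemma sum_comp (x : ℂ) (n : ℕ) :
    ∑ c : Composition n,
        x ^ c.length • (c.blocks.map (fun m => Dop * Lop ^ (m - 1))).prod = Rop x n := by
  induction n using Nat.strong_induction_on with
  | _ n ih =>
    match n with
    | 0 =>
      have hblocks : ∀ c : Composition 0, c.blocks = [] := by
        intro c
        have hs := c.blocks_sum
        cases hb : c.blocks with
        | nil => rfl
        | cons a t =>
          have := c.blocks_pos (by rw [hb]; exact List.mem_cons_self)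
          rw [hb] at hs
          simp only [List.sum_cons] at hs
          omega
      have : ∀ c : Composition 0,
          x ^ c.length • ((c.blocks.map (fun m => Dop * Lop ^ (m - 1))).prod)
            = (1 : Module.End ℂ (Polynomial ℂ)) := by
        intro c
        have hl : c.length = 0 := by
          rw [← c.blocks_length, hblocks c]; rfl
        rw [hblocks c, hl]
        simp
      rw [Finset.sum_congr rfl fun c _ => this c, Finset.sum_const, Finset.card_univ,
        composition_card]
      simp [Rop]
    | n + 1 =>
      rw [← Fintype.sum_bijective (consC n) (consC_bij n) _ _ (fun p => rfl)]
      rw [← Finset.univ_sigma_univ, Finset.sum_sigma]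
      have hinner : ∀ j : Fin (n + 1),
          ∑ c : Composition (n - (j : ℕ)),
            x ^ (consC n ⟨j, c⟩).length •
              ((consC n ⟨j, c⟩).blocks.map (fun m => Dop * Lop ^ (m - 1))).prod
          = (x • (Dop * Lop ^ (j : ℕ))) * Rop x (n - (j : ℕ)) := by
        intro j
        rw [← ih (n - (j : ℕ)) (by omega)]
        rw [Finset.mul_sum]
        refine Finset.sum_congr rfl fun c _ => ?_
        have hlen : (consC n ⟨j, c⟩).length = c.length + 1 := by
          show (((j : ℕ) + 1) :: c.blocks).length = c.length + 1
          rw [List.length_cons, c.blocks_length]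
        have hbl : (consC n ⟨j, c⟩).blocks = ((j : ℕ) + 1) :: c.blocks := rfl
        rw [hlen, hbl, List.map_cons, List.prod_cons]
        rw [Nat.add_sub_cancel]
        rw [pow_succ, mul_comm (x ^ c.length) x, mul_smul, smul_mul_assoc,
          mul_smul_comm]
      rw [Finset.sum_congr rfl fun j _ => hinner j]
      rw [Rop_succ]
      exact Fin.sum_univ_eq_sum_range (fun j => (x • (Dop * Lop ^ j)) * Rop x (n - j)) (n + 1)

/-- `Σ_{i_1+⋯+i_k=i} x^k • D L^{i_1−1} ⋯ D L^{i_k−1} = x D (L + x D)^{i−1}`,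
the sum running over compositions of `i`. -/
theorem stmt7 (i : ℕ) (hi : 1 ≤ i) (x : ℂ) :
    ∑ c : Composition i,
        x ^ c.length • (c.blocks.map (fun m => Dop * Lop ^ (m - 1))).prod =
      (x • Dop) * (Lop + x • Dop) ^ (i - 1) := by
  obtain ⟨n, rfl⟩ := Nat.exists_eq_add_of_le hi
  rw [sum_comp x (1 + n)]
  rw [show 1 + n = n + 1 by omega]
  rfl
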